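/- (Gowers's Hilbert space regularity lemma.) Let δ > 0 and let η : ℝ₊ → ℝ₊ be any function. Let H be a Hilbert space with norm ‖·‖_H and let ‖·‖ be an arbitrary further extended seminorm on H, with dual extended seminorm ‖·‖*. Then for every f ∈ H with ‖f‖_H ≤ 1 there exists a constant C, bounded in terms of δ and η only, and a decomposition f = σ + u + v such that ‖σ‖ < C, ‖u‖* < η(C), and ‖v‖_H < δ. -/

import Mathlib

open scoped ENNReal BigOperators

/-- The sequence `C_r = 1`, `C_{i-1} = max {C_i, 2/η(C_i)}`, reindexed so that
`gowersC η n = C_{r-n}`. -/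
noncomputable def gowersC (η : ℝ → ℝ) : ℕ → ℝ
  | 0 => 1
  | n + 1 => max (gowersC η n) (2 / η (gowersC η n))

set_option maxHeartbeats 1600000 in
/-- Gowers's Hilbert space regularity lemma: for any `δ > 0`, any `η : ℝ₊ → ℝ₊`, any
extended seminorm `N` on a Hilbert space `H` with dual `N*`, and any `f` with `‖f‖ ≤ 1`,
there is a constant `C`, among the values `gowersC η n` for `n < r` with `r ≥ 2δ⁻²`
(hence depending only on `δ` and `η`), and a decomposition `f = σ + u + v` with
`N σ < C`, `N* u < η C`, `‖v‖ < δ`. -/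
theorem stmt_4 (δ : ℝ) (hδ : 0 < δ) (η : ℝ → ℝ) (hη : ∀ x, 0 < x → 0 < η x)
    {H : Type*} [NormedAddCommGroup H] [InnerProductSpace ℂ H] [CompleteSpace H]
    (N : H → ℝ≥0∞) (hN0 : N 0 = 0)
    (hNadd : ∀ f g : H, N (f + g) ≤ N f + N g)
    (hNsmul : ∀ (c : ℂ) (f : H), c ≠ 0 → N (c • f) = (‖c‖₊ : ℝ≥0∞) * N f)
    (f : H) (hf : ‖f‖ ≤ 1) (r : ℕ) (hr : 2 / δ ^ 2 ≤ (r : ℝ)) :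
    ∃ n < r, ∃ σ u v : H, f = σ + u + v ∧
      N σ < ENNReal.ofReal (gowersC η n) ∧
      (⨆ (φ : H) (_ : N φ ≤ 1), (‖(inner ℂ u φ : ℂ)‖₊ : ℝ≥0∞))
        < ENNReal.ofReal (η (gowersC η n)) ∧
      ‖v‖ < δ := by
  classical
  letI : InnerProductSpace ℝ H := InnerProductSpace.complexToReal
  set C : ℕ → ℝ := gowersC η with hCdef
  have hC1 : ∀ n, 1 ≤ C n := by
    intro n
    induction n with
    | zero => simp [hCdef, gowersC]
    | succ n ih => exact le_trans ih (le_max_left _ _)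
  have hCpos : ∀ n, 0 < C n := fun n => lt_of_lt_of_le one_pos (hC1 n)
  have hCmono : Monotone C := monotone_nat_of_le_succ fun n => le_max_left _ _
  have hηpos : ∀ n, 0 < η (C n) := fun n => hη _ (hCpos n)
  have hCsucc : ∀ n, 2 / η (C n) ≤ C (n + 1) := fun n => le_max_right _ _
  set S : ℕ → Set H := fun n => {x | N x < ENNReal.ofReal (C n)} with hSdef
  have hS0 : ∀ n, (0 : H) ∈ S n := by
    intro n
    show N 0 < ENNReal.ofReal (C n)
    rw [hN0]
    exact ENNReal.ofReal_pos.2 (hCpos n)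
  -- real scalar bound for N
  have hNsmulR : ∀ (a : ℝ) (x : H), 0 ≤ a → N (a • x) ≤ ENNReal.ofReal a * N x := by
    intro a x ha
    rcases eq_or_lt_of_le ha with h | h
    · rw [← h, zero_smul, hN0]
      exact zero_le
    · have hax : (a : ℂ) • x = a • x := Complex.coe_smul a x
      rw [← hax, hNsmul _ _ (by exact_mod_cast h.ne')]
      apply le_of_eq
      congr 1
      rw [← enorm_eq_nnnorm, ← ofReal_norm]
      congr 1
      simp [Real.norm_eq_abs, abs_of_nonneg ha]
  have hSconv : ∀ n, Convex ℝ (S n) := by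
    intro n x hx y hy a b ha hb hab
    have hx' : N x < ENNReal.ofReal (C n) := hx
    have hy' : N y < ENNReal.ofReal (C n) := hy
    have hmax : max (N x) (N y) < ENNReal.ofReal (C n) := max_lt hx' hy'
    show N (a • x + b • y) < ENNReal.ofReal (C n)
    calc N (a • x + b • y) ≤ N (a • x) + N (b • y) := hNadd _ _
      _ ≤ ENNReal.ofReal a * N x + ENNReal.ofReal b * N y :=
          add_le_add (hNsmulR a x ha) (hNsmulR b y hb)
      _ ≤ ENNReal.ofReal a * max (N x) (N y) + ENNReal.ofReal b * max (N x) (N y) :=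
          add_le_add (mul_le_mul_right (le_max_left _ _) _)
            (mul_le_mul_right (le_max_right _ _) _)
      _ = (ENNReal.ofReal a + ENNReal.ofReal b) * max (N x) (N y) := (add_mul _ _ _).symm
      _ = max (N x) (N y) := by
          rw [← ENNReal.ofReal_add ha hb, hab, ENNReal.ofReal_one, one_mul]
      _ < ENNReal.ofReal (C n) := hmax
  have hSmono : ∀ m k : ℕ, m ≤ k → S m ⊆ S k := by
    intro m k hmk x hx
    exact lt_of_lt_of_le hx (ENNReal.ofReal_le_ofReal (hCmono hmk))
  set Θ : ℕ → ℝ := fun n => Metric.infDist f (S n) with hΘdef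
  have hΘnonneg : ∀ n, 0 ≤ Θ n := fun n => Metric.infDist_nonneg
  have hΘle1 : ∀ n, Θ n ≤ 1 := by
    intro n
    calc Θ n ≤ dist f 0 := Metric.infDist_le_dist_of_mem (hS0 n)
      _ = ‖f‖ := by simp [dist_eq_norm]
      _ ≤ 1 := hf
  have hΘanti : ∀ n, Θ (n + 1) ≤ Θ n := fun n =>
    Metric.infDist_le_infDist_of_subset (hSmono n (n + 1) (Nat.le_succ n)) ⟨0, hS0 n⟩
  have hrpos : (0 : ℝ) < (r : ℝ) := lt_of_lt_of_le (by positivity) hr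
  -- pigeonhole
  have hpig : ∃ n < r, Θ n ^ 2 - Θ (n + 1) ^ 2 ≤ 1 / (r : ℝ) := by
    by_contra hcon
    push_neg at hcon
    have hne : (Finset.range r).Nonempty := by
      rw [Finset.nonempty_range_iff]
      intro h0
      rw [h0] at hrpos
      simp at hrpos
    have hlt : ∑ n ∈ Finset.range r, (1 / (r : ℝ))
        < ∑ n ∈ Finset.range r, (Θ n ^ 2 - Θ (n + 1) ^ 2) := by
      refine Finset.sum_lt_sum_of_nonempty hne fun n hn => hcon n (Finset.mem_range.1 hn)
    rw [Finset.sum_const, Finset.card_range, nsmul_eq_mul,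
      Finset.sum_range_sub' (fun n => Θ n ^ 2)] at hlt
    have h1 : (r : ℝ) * (1 / r) = 1 := by field_simp
    have h2 : Θ 0 ^ 2 ≤ 1 := by nlinarith [hΘnonneg 0, hΘle1 0]
    have h3 : 0 ≤ Θ r ^ 2 := sq_nonneg _
    rw [h1] at hlt
    linarith
  obtain ⟨n, hnr, hgap⟩ := hpig
  have hδ2 : (0 : ℝ) < δ ^ 2 := by positivity
  have hrδ : (1 : ℝ) / r ≤ δ ^ 2 / 2 := by
    rw [div_le_iff₀ hδ2] at hr
    rw [div_le_div_iff₀ hrpos two_pos]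
    nlinarith
  have hgap' : Θ n ^ 2 - Θ (n + 1) ^ 2 ≤ δ ^ 2 / 2 := hgap.trans hrδ
  -- projections onto the closures
  have hΘeq : ∀ m, Θ m = ⨅ w : (closure (S m) : Set H), ‖f - w‖ := by
    intro m
    have h1 : Θ m = Metric.infDist f (closure (S m)) := (Metric.infDist_closure).symm
    rw [h1, Metric.infDist_eq_iInf]
    exact iInf_congr fun w => dist_eq_norm f w
  obtain ⟨p, hpmem, hpmin⟩ :=
    exists_norm_eq_iInf_of_complete_convex ⟨0, subset_closure (hS0 n)⟩
      isClosed_closure.isComplete ((hSconv n).closure) f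
  obtain ⟨q, hqmem, hqmin⟩ :=
    exists_norm_eq_iInf_of_complete_convex ⟨0, subset_closure (hS0 (n + 1))⟩
      isClosed_closure.isComplete ((hSconv (n + 1)).closure) f
  have hΘp : ‖f - p‖ = Θ n := hpmin.trans (hΘeq n).symm
  have hΘq : ‖f - q‖ = Θ (n + 1) := hqmin.trans (hΘeq (n + 1)).symm
  have hvar : ∀ w ∈ closure (S (n + 1)), inner (𝕜 := ℝ) (f - q) (w - q) ≤ (0 : ℝ) :=
    (norm_eq_iInf_iff_real_inner_le_zero ((hSconv (n + 1)).closure) hqmem).1 hqmin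
  have hpmem' : p ∈ closure (S (n + 1)) :=
    closure_mono (hSmono n (n + 1) (Nat.le_succ n)) hpmem
  -- ‖q - p‖² ≤ Θ n ² - Θ (n+1) ²
  have hpq2 : ‖f - p‖ ^ 2 = ‖f - q‖ ^ 2 + 2 * inner (𝕜 := ℝ) (f - q) (q - p) + ‖q - p‖ ^ 2 := by
    have h : f - p = (f - q) + (q - p) := by abel
    rw [h, norm_add_sq_real]
  have hge : (0 : ℝ) ≤ inner (𝕜 := ℝ) (f - q) (q - p) := by
    have h1 := hvar p hpmem'
    have h2 : inner (𝕜 := ℝ) (f - q) (q - p) = -inner (𝕜 := ℝ) (f - q) (p - q) := by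
      rw [← inner_neg_right]
      congr 1
      abel
    rw [h2]
    linarith
  have hqp : ‖q - p‖ ^ 2 ≤ Θ n ^ 2 - Θ (n + 1) ^ 2 := by
    rw [hΘp, hΘq] at hpq2
    linarith
  -- ⟪f - q, q⟫ ≤ 1/4
  have hq14 : inner (𝕜 := ℝ) (f - q) q ≤ (1 : ℝ) / 4 := by
    have h1 : inner (𝕜 := ℝ) (f - q) q = inner (𝕜 := ℝ) f q - inner (𝕜 := ℝ) q q :=
      inner_sub_left _ _ _
    have h2 : inner (𝕜 := ℝ) q q = ‖q‖ ^ 2 := real_inner_self_eq_norm_sq q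
    have h3 : inner (𝕜 := ℝ) f q ≤ ‖f‖ * ‖q‖ := real_inner_le_norm f q
    have h4 : ‖f‖ * ‖q‖ ≤ ‖q‖ := by
      have := norm_nonneg q
      nlinarith
    rw [h1, h2]
    nlinarith [sq_nonneg (‖q‖ - 1 / 2)]
  -- dual bound for u = f - q
  have hreinner : ∀ x y : H, (inner (𝕜 := ℝ) x y : ℝ) = (inner (𝕜 := ℂ) x y : ℂ).re :=
    fun x y => rfl
  have hdual : ∀ φ : H, N φ ≤ 1 → ‖(inner ℂ (f - q) φ : ℂ)‖ ≤ η (C n) / 4 := by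
    intro φ hφ
    set a : ℂ := inner ℂ (f - q) φ with ha
    rcases eq_or_ne a 0 with h0 | h0
    · rw [h0, norm_zero]
      have := hηpos n
      linarith
    · have hna : (0 : ℝ) < ‖a‖ := norm_pos_iff.2 h0
      have hCn1 : (0 : ℝ) < C (n + 1) := hCpos (n + 1)
      set t : ℝ := C (n + 1) / 2 / ‖a‖ with ht
      have htpos : 0 < t := by positivity
      set c : ℂ := (t : ℂ) * (starRingEnd ℂ) a with hc
      have hcnorm : ‖c‖ = C (n + 1) / 2 := by
        rw [hc, norm_mul, RCLike.norm_conj, Complex.norm_real, Real.norm_eq_abs,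
          abs_of_nonneg htpos.le, ht]
        exact div_mul_cancel₀ _ hna.ne'
      have hc0 : c ≠ 0 := by
        intro h
        rw [h, norm_zero] at hcnorm
        linarith
      have hmem : c • φ ∈ S (n + 1) := by
        show N (c • φ) < ENNReal.ofReal (C (n + 1))
        rw [hNsmul c φ hc0]
        calc (‖c‖₊ : ℝ≥0∞) * N φ ≤ (‖c‖₊ : ℝ≥0∞) * 1 := mul_le_mul_right hφ _
          _ = ENNReal.ofReal (C (n + 1) / 2) := by
              rw [mul_one, ← enorm_eq_nnnorm, ← ofReal_norm, hcnorm]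
          _ < ENNReal.ofReal (C (n + 1)) := by
              rw [ENNReal.ofReal_lt_ofReal_iff hCn1]
              linarith
      have hw := hvar (c • φ) (subset_closure hmem)
      have hsplit : inner (𝕜 := ℝ) (f - q) (c • φ - q)
          = inner (𝕜 := ℝ) (f - q) (c • φ) - inner (𝕜 := ℝ) (f - q) q :=
        inner_sub_right _ _ _
      have hca : (inner ℂ (f - q) (c • φ) : ℂ) = c * a := by
        rw [inner_smul_right, ha]
      have hconj : (starRingEnd ℂ) a * a = ((‖a‖ : ℂ)) ^ 2 := RCLike.conj_mul a
      have hcare : (c * a).re = C (n + 1) / 2 * ‖a‖ := by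
        have h1 : c * a = ((t * ‖a‖ ^ 2 : ℝ) : ℂ) := by
          rw [hc, mul_assoc, hconj]
          push_cast
          ring
        rw [h1, Complex.ofReal_re, ht, sq, ← mul_assoc, div_mul_cancel₀ _ hna.ne']
      have hrc : inner (𝕜 := ℝ) (f - q) (c • φ) = C (n + 1) / 2 * ‖a‖ := by
        rw [hreinner, hca, hcare]
      have hmain : C (n + 1) / 2 * ‖a‖ ≤ 1 / 4 := by
        rw [hsplit, hrc] at hw
        linarith
      -- conclude using C (n+1) ≥ 2 / η (C n)
      have hη' := hηpos n
      have hCs := hCsucc n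
      have h2C : 2 / η (C n) * ‖a‖ ≤ C (n + 1) * ‖a‖ :=
        mul_le_mul_of_nonneg_right hCs hna.le
      rw [div_mul_eq_mul_div, div_le_iff₀ hη'] at h2C
      -- h2C : 2 * ‖a‖ ≤ C (n+1) * ‖a‖ * η (C n)  -- careful
      nlinarith
  -- pick σ ∈ S n close to p
  obtain ⟨σ, hσS, hσp⟩ : ∃ σ ∈ S n, dist p σ < δ / 5 := by
    have := Metric.mem_closure_iff.1 hpmem (δ / 5) (by positivity)
    obtain ⟨σ, hσ1, hσ2⟩ := this
    exact ⟨σ, hσ1, hσ2⟩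
  refine ⟨n, hnr, σ, f - q, q - σ, by abel, hσS, ?_, ?_⟩
  · have hle : (⨆ (φ : H) (_ : N φ ≤ 1), (‖(inner ℂ (f - q) φ : ℂ)‖₊ : ℝ≥0∞))
        ≤ ENNReal.ofReal (η (C n) / 4) := by
      refine iSup₂_le fun φ hφ => ?_
      rw [← enorm_eq_nnnorm, ← ofReal_norm]
      exact ENNReal.ofReal_le_ofReal (hdual φ hφ)
    refine lt_of_le_of_lt hle ?_
    rw [ENNReal.ofReal_lt_ofReal_iff (hηpos n)]
    linarith [hηpos n]
  · have h1 : ‖q - p‖ ≤ 3 * δ / 4 := by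
      nlinarith [norm_nonneg (q - p), hgap', hqp]
    have h2 : ‖q - σ‖ ≤ ‖q - p‖ + ‖p - σ‖ := norm_sub_le_norm_sub_add_norm_sub q p σ
    have h3 : ‖p - σ‖ < δ / 5 := by rwa [← dist_eq_norm]
    linarith
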